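/- Let L be a real symmetric positive semidefinite matrix with λ_max(L) ≤ 2 and let Λ be a diagonal matrix with diagonal entries in (0,1]. Then the matrix L − (1/2)·Lᵀ Λ L is positive semidefinite. -/

import Mathlib

open Matrix
open scoped MatrixOrder

lemma psd_smul {N : ℕ} {A : Matrix (Fin N) (Fin N) ℝ} (hA : A.PosSemidef)
    {c : ℝ} (hc : 0 ≤ c) : (c • A).PosSemidef := by
  exact hA.smul hc

lemma two_one_sub_psd {N : ℕ} (L : Matrix (Fin N) (Fin N) ℝ)
    (hL : L.PosSemidef) (hmax : ∀ μ ∈ spectrum ℝ L, μ ≤ 2) :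
    ((2 : ℝ) • (1 : Matrix (Fin N) (Fin N) ℝ) - L).PosSemidef := by
  have hM : ((2 : ℝ) • (1 : Matrix (Fin N) (Fin N) ℝ) - L).IsHermitian := by
    unfold Matrix.IsHermitian
    rw [conjTranspose_sub, conjTranspose_smul, conjTranspose_one, hL.1]
    simp
  apply hM.posSemidef_iff_eigenvalues_nonneg.mpr
  intro i
  have halg : (2 : ℝ) • (1 : Matrix (Fin N) (Fin N) ℝ) =
      algebraMap ℝ (Matrix (Fin N) (Fin N) ℝ) 2 := by
    simp [Algebra.algebraMap_eq_smul_one]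
  have hmem : hM.eigenvalues i ∈
      spectrum ℝ (algebraMap ℝ (Matrix (Fin N) (Fin N) ℝ) 2 - L) := by
    rw [← halg]; exact hM.eigenvalues_mem_spectrum_real i
  rw [← spectrum.singleton_sub_eq] at hmem
  obtain ⟨a, ha, b, hb, hab⟩ := hmem
  simp only [Set.mem_singleton_iff] at ha
  subst ha
  have := hmax b hb
  have h2 : 2 - b = hM.eigenvalues i := hab
  show (0 : ℝ) ≤ _
  linarith

/-- If `L` is symmetric PSD with all eigenvalues at most `2` and `Λ` is diagonal with
diagonal entries in `(0, 1]`, then `L - (1/2) Lᵀ Λ L` is positive semidefinite. -/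
theorem sub_half_LT_Lambda_L_posSemidef {N : ℕ} (L : Matrix (Fin N) (Fin N) ℝ)
    (hL : L.PosSemidef)
    (hmax : ∀ μ ∈ spectrum ℝ L, μ ≤ 2)
    (d : Fin N → ℝ) (hd : ∀ i, 0 < d i ∧ d i ≤ 1) :
    (L - (1 / 2 : ℝ) • (Lᵀ * Matrix.diagonal d * L)).PosSemidef := by
  have hLT : Lᵀ = L := by
    have h := hL.1.eq
    rwa [conjTranspose_eq_transpose_of_trivial] at h
  set S := CFC.sqrt L with hS
  have hSpsd : S.PosSemidef := (CFC.sqrt_nonneg L).posSemidef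
  have hSS : S * S = L := CFC.sqrt_mul_sqrt_self L hL.nonneg
  have hM := two_one_sub_psd L hL hmax
  -- part 1 : L - (1/2) • (L * L)
  have h1 : (L - (1 / 2 : ℝ) • (L * L)).PosSemidef := by
    have hconj := (psd_smul hM (by norm_num : (0:ℝ) ≤ 1/2)).conjTranspose_mul_mul_same S
    have heq : Sᴴ * ((1 / 2 : ℝ) • ((2 : ℝ) • (1 : Matrix (Fin N) (Fin N) ℝ) - L)) * S
        = L - (1 / 2 : ℝ) • (L * L) := by
      have hSH : Sᴴ = S := hSpsd.1
      have hSLS : S * L * S = L * L := by rw [← hSS]; noncomm_ring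
      rw [hSH, Matrix.mul_smul, Matrix.smul_mul, Matrix.mul_sub, Matrix.sub_mul,
        Matrix.mul_smul, Matrix.smul_mul, Matrix.mul_one, hSS, hSLS,
        smul_sub, smul_smul]
      norm_num
    rwa [heq] at hconj
  -- part 2 : (1/2) • (Lᵀ * diagonal (1 - d) * L)
  have h2 : ((1 / 2 : ℝ) • (Lᵀ * Matrix.diagonal (fun i => 1 - d i) * L)).PosSemidef := by
    apply psd_smul _ (by norm_num)
    have hdiag : (Matrix.diagonal (fun i => 1 - d i)).PosSemidef :=
      Matrix.PosSemidef.diagonal (fun i => by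
        simpa using (by linarith [(hd i).2] : (0:ℝ) ≤ 1 - d i))
    have := hdiag.conjTranspose_mul_mul_same L
    rwa [conjTranspose_eq_transpose_of_trivial] at this
  have key : L - (1 / 2 : ℝ) • (Lᵀ * Matrix.diagonal d * L)
      = (L - (1 / 2 : ℝ) • (L * L))
        + (1 / 2 : ℝ) • (Lᵀ * Matrix.diagonal (fun i => 1 - d i) * L) := by
    have hdd : Matrix.diagonal (fun i => 1 - d i) = 1 - Matrix.diagonal d := by
      rw [← Matrix.diagonal_one, ← Matrix.diagonal_sub]
    rw [hdd, hLT, Matrix.mul_sub, Matrix.sub_mul, Matrix.mul_one, smul_sub]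
    abel
  rw [key]
  exact h1.add h2
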